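/- Let {Lₙ, Wₙ}_{n∈ℤ} be a representation of the W₃-algebra on an inner product space with lowest weight vector Ω satisfying LₙΩ = WₙΩ = 0 for n > 0 and L₀Ω = W₀Ω = 0. If (L₋₁ + L₀)† = L₁ + L₀ with respect to the inner product, then L₋₁Ω = 0, and consequently W₋₁Ω = 0 and W₋₂Ω = 0. -/

import Mathlib

/-- For a representation {Lₙ, Wₙ} of the W₃-algebra on an inner product space with a
vector Ω satisfying LₙΩ = WₙΩ = 0 for n > 0 and L₀Ω = W₀Ω = 0: if (L₋₁ + L₀)† = L₁ + L₀,
then L₋₁Ω = 0, W₋₁Ω = 0 and W₋₂Ω = 0. -/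
theorem stmt_12 {V : Type*} [NormedAddCommGroup V] [InnerProductSpace ℂ V]
    (c : ℂ) (L W : ℤ → V →ₗ[ℂ] V)
    (hLL : ∀ m n : ℤ, L m ∘ₗ L n - L n ∘ₗ L m
      = ((m : ℂ) - (n : ℂ)) • L (m + n)
        + (if m + n = 0 then c / 12 * (m : ℂ) * ((m : ℂ) ^ 2 - 1) else 0) • LinearMap.id)
    (hLW : ∀ m n : ℤ, L m ∘ₗ W n - W n ∘ₗ L m = (2 * (m : ℂ) - (n : ℂ)) • W (m + n))
    (Ω : V)
    (hpos : ∀ n : ℤ, 0 < n → L n Ω = 0 ∧ W n Ω = 0)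
    (hL0 : L 0 Ω = 0) (hW0 : W 0 Ω = 0)
    (hadj : ∀ x y : V, (inner ℂ ((L (-1) + L 0) x) y : ℂ) = inner ℂ x ((L 1 + L 0) y)) :
    L (-1) Ω = 0 ∧ W (-1) Ω = 0 ∧ W (-2) Ω = 0 := by
  have hL1 : L 1 Ω = 0 := (hpos 1 one_pos).1
  -- L 1 (L (-1) Ω) = 0
  have h1 : L 1 (L (-1) Ω) = 0 := by
    have h := congrArg (fun f : V →ₗ[ℂ] V => f Ω) (hLL 1 (-1))
    simp only [LinearMap.sub_apply, LinearMap.comp_apply, LinearMap.add_apply,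
      LinearMap.smul_apply, LinearMap.id_apply] at h
    norm_num [hL1, hL0] at h
    exact h
  -- L 0 (L (-1) Ω) = L (-1) Ω
  have h0 : L 0 (L (-1) Ω) = L (-1) Ω := by
    have h := congrArg (fun f : V →ₗ[ℂ] V => f Ω) (hLL 0 (-1))
    simp only [LinearMap.sub_apply, LinearMap.comp_apply, LinearMap.add_apply,
      LinearMap.smul_apply, LinearMap.id_apply] at h
    norm_num [hL0] at h
    exact h
  -- ⟨Ω, L (-1) Ω⟩ = 0
  have hio : (inner ℂ Ω (L (-1) Ω) : ℂ) = 0 := by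
    have h := hadj Ω Ω
    simp only [LinearMap.add_apply, hL0, hL1, add_zero, zero_add, inner_zero_right] at h
    have := congrArg (starRingEnd ℂ) h
    simpa [inner_conj_symm] using this
  have hmain : L (-1) Ω = 0 := by
    have h := hadj Ω (L (-1) Ω)
    simp only [LinearMap.add_apply, hL0, add_zero, h1, h0, zero_add, hio] at h
    -- h : ⟪L (-1) Ω, L (-1) Ω⟫ = ⟪Ω, 0 + L (-1) Ω⟫ = 0
    rw [inner_self_eq_zero] at h
    · exact h
  refine ⟨hmain, ?_, ?_⟩
  · have h := congrArg (fun f : V →ₗ[ℂ] V => f Ω) (hLW (-1) 0)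
    simp only [LinearMap.sub_apply, LinearMap.comp_apply, LinearMap.smul_apply] at h
    norm_num [hW0, hmain] at h
    exact h
  · have hW1 : W (-1) Ω = 0 := by
      have h := congrArg (fun f : V →ₗ[ℂ] V => f Ω) (hLW (-1) 0)
      simp only [LinearMap.sub_apply, LinearMap.comp_apply, LinearMap.smul_apply] at h
      norm_num [hW0, hmain] at h
      exact h
    have h := congrArg (fun f : V →ₗ[ℂ] V => f Ω) (hLW (-1) (-1))
    simp only [LinearMap.sub_apply, LinearMap.comp_apply, LinearMap.smul_apply] at h
    norm_num [hW1, hmain] at h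
    exact h
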